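/- There exists Θ₀ > 0 such that for every 0 < Θ ≤ Θ₀ the map (x_ξ, θ) ↦ x_ξ + θN_ξ is injective on the set {(x_ξ, θ) : x_ξ ∈ Σ₀, |θ| < θ_ξ}; that is, if x_{ξ₁}, x_{ξ₂} ∈ Σ₀ and |θ_i| < θ_{ξ_i} (i = 1,2) satisfy x_{ξ₁} + θ₁N_{ξ₁} = x_{ξ₂} + θ₂N_{ξ₂}, then x_{ξ₁} = x_{ξ₂} and θ₁ = θ₂. -/

import Mathlib

open MeasureTheory Real
open scoped RealInnerProductSpace

section Aux

variable {E F : Type*} [NormedAddCommGroup E] [NormedSpace ℝ E]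
  [NormedAddCommGroup F] [NormedSpace ℝ F]

lemma aux_norm_fderiv_le (f : EuclideanSpace ℝ (Fin d) → F) (x : EuclideanSpace ℝ (Fin d)) :
    ‖fderiv ℝ f x‖ ≤ ‖iteratedFDeriv ℝ 1 f x‖ := by
  refine ContinuousLinearMap.opNorm_le_bound _ (norm_nonneg _) (fun v => ?_)
  have h : fderiv ℝ f x v = iteratedFDeriv ℝ 1 f x (fun _ => v) := by
    rw [iteratedFDeriv_one_apply]
  rw [h]
  calc ‖iteratedFDeriv ℝ 1 f x fun _ => v‖
      ≤ ‖iteratedFDeriv ℝ 1 f x‖ * ∏ _i : Fin 1, ‖v‖ :=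
        ContinuousMultilinearMap.le_opNorm _ _
    _ = ‖iteratedFDeriv ℝ 1 f x‖ * ‖v‖ := by simp

lemma aux_rpow (a b s : ℝ) (ha : 1 ≤ a) (hb : 1 ≤ b) (h1 : a ≤ 2 * b) (h2 : b ≤ 2 * a) :
    b ^ s ≤ 2 ^ |s| * a ^ s := by
  rcases le_or_gt 0 s with hs | hs
  · calc b ^ s ≤ (2 * a) ^ s := Real.rpow_le_rpow (by linarith) h2 hs
      _ = 2 ^ s * a ^ s := Real.mul_rpow (by norm_num) (by linarith)
      _ = 2 ^ |s| * a ^ s := by rw [abs_of_nonneg hs]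
  · have hab : a * 2⁻¹ ≤ b := by linarith
    calc b ^ s ≤ (a * 2⁻¹) ^ s := Real.rpow_le_rpow_of_nonpos (by linarith) hab hs.le
      _ = a ^ s * (2⁻¹ : ℝ) ^ s := Real.mul_rpow (by linarith) (by norm_num)
      _ = 2 ^ |s| * a ^ s := by
          rw [abs_of_neg hs, Real.inv_rpow (by norm_num), ← Real.rpow_neg (by norm_num)]
          ring

lemma aux_one_le_two_rpow (s : ℝ) : (1 : ℝ) ≤ 2 ^ |s| := by
  calc (1 : ℝ) = 2 ^ (0 : ℝ) := by rw [Real.rpow_zero]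
    _ ≤ 2 ^ |s| := Real.rpow_le_rpow_of_exponent_le one_le_two (abs_nonneg s)

end Aux

/-- Proposition 2.2(1): for sufficiently small `Θ`, the map
`(x_ξ, θ) ↦ x_ξ + θN_ξ` is injective on `{(x_ξ, θ) : x_ξ ∈ Σ₀, |θ| < θ_ξ}`. -/
theorem statement8
    (d : ℕ) (hd : 2 ≤ d)
    (M_ω m_ω : ℝ) (hm : m_ω ≤ M_ω - 1)
    (ω : EuclideanSpace ℝ (Fin d) → ℝ)
    (hω : ContDiff ℝ 4 ω)
    (C_ω : ℝ) (hCω : 0 < C_ω)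
    (hωbd : ∀ i : ℕ, i ≤ 4 → ∀ x : EuclideanSpace ℝ (Fin d),
      ‖iteratedFDeriv ℝ i ω x‖ ≤ C_ω * (max 1 ‖x‖) ^ (M_ω - (i : ℝ)))
    (h0Sigma : ω 0 = 0)
    (hcrit0 : gradient ω 0 = 0)
    (hhess : Function.Bijective (fderiv ℝ (gradient ω) 0))
    (hnocrit : ∀ x : EuclideanSpace ℝ (Fin d), ω x = 0 → x ≠ 0 → gradient ω x ≠ 0)
    (C_g : ℝ) (hCg : 0 < C_g)
    (hg1 : ∀ x : EuclideanSpace ℝ (Fin d), ω x = 0 → x ≠ 0 → 1 ≤ ‖x‖ →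
      C_g * ‖x‖ ^ m_ω ≤ ‖gradient ω x‖)
    (hg2 : ∀ x : EuclideanSpace ℝ (Fin d), ω x = 0 → x ≠ 0 → ‖x‖ ≤ 1 →
      C_g * ‖x‖ ≤ ‖gradient ω x‖) :
    ∃ Θ₀ : ℝ, 0 < Θ₀ ∧ ∀ Θ : ℝ, 0 < Θ → Θ ≤ Θ₀ →
      ∀ xξ₁ xξ₂ : EuclideanSpace ℝ (Fin d), ω xξ₁ = 0 → xξ₁ ≠ 0 →
        ω xξ₂ = 0 → xξ₂ ≠ 0 →
        ∀ θ₁ θ₂ : ℝ,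
          |θ₁| < Θ * (max 1 ‖xξ₁‖) ^ (2 - M_ω) →
          |θ₂| < Θ * (max 1 ‖xξ₂‖) ^ (2 - M_ω) →
          xξ₁ + θ₁ • gradient ω xξ₁ = xξ₂ + θ₂ • gradient ω xξ₂ →
          xξ₁ = xξ₂ ∧ θ₁ = θ₂ := by
  classical
  set P : ℝ := 2 ^ |M_ω - 2| with hPdef
  have hP1 : (1 : ℝ) ≤ P := aux_one_le_two_rpow _
  have hP0 : (0 : ℝ) < P := lt_of_lt_of_le one_pos hP1
  refine ⟨1 / (8 * C_ω * P * P), by positivity, ?_⟩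
  intro Θ hΘ0 hΘle x₁ x₂ hω1 hx1 hω2 hx2 θ₁ θ₂ hθ₁ hθ₂ heq
  -- basic notations
  set N₁ := gradient ω x₁ with hN₁def
  set N₂ := gradient ω x₂ with hN₂def
  set v : EuclideanSpace ℝ (Fin d) := x₂ - x₁ with hvdef
  set A : ℝ := max 1 ‖x₁‖ with hAdef
  set B : ℝ := max 1 ‖x₂‖ with hBdef
  have hA1 : (1 : ℝ) ≤ A := le_max_left _ _
  have hB1 : (1 : ℝ) ≤ B := le_max_left _ _
  have hA0 : (0 : ℝ) < A := lt_of_lt_of_le one_pos hA1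
  have hB0 : (0 : ℝ) < B := lt_of_lt_of_le one_pos hB1
  -- gradient / fderiv relations
  have hgradnorm : ∀ x : EuclideanSpace ℝ (Fin d), ‖gradient ω x‖ = ‖fderiv ℝ ω x‖ := by
    intro x
    rw [gradient]
    exact LinearIsometryEquiv.norm_map _ _
  have hgradinner : ∀ x w : EuclideanSpace ℝ (Fin d), ⟪gradient ω x, w⟫ = fderiv ℝ ω x w := by
    intro x w
    rw [gradient]
    exact InnerProductSpace.toDual_symm_apply
  -- first derivative bound
  have hfd1 : ∀ x : EuclideanSpace ℝ (Fin d), ‖fderiv ℝ ω x‖ ≤ C_ω * (max 1 ‖x‖) ^ (M_ω - 1) := by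
    intro x
    have h := hωbd 1 (by norm_num) x
    push_cast at h
    exact le_trans (aux_norm_fderiv_le ω x) h
  have hN1bd : ‖N₁‖ ≤ C_ω * A ^ (M_ω - 1) := by rw [hN₁def, hgradnorm]; exact hfd1 x₁
  have hN2bd : ‖N₂‖ ≤ C_ω * B ^ (M_ω - 1) := by rw [hN₂def, hgradnorm]; exact hfd1 x₂
  -- the displacement identity
  have hv : v = θ₁ • N₁ - θ₂ • N₂ := by
    rw [hvdef, sub_eq_sub_iff_add_eq_add, ← heq]
    abel
  -- Θ * C_ω is small
  have hΘC : Θ * C_ω ≤ 1 / 8 := by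
    have h1 : Θ * C_ω ≤ (1 / (8 * C_ω * P * P)) * C_ω := by
      apply mul_le_mul_of_nonneg_right hΘle hCω.le
    have h2 : (1 / (8 * C_ω * P * P)) * C_ω = 1 / (8 * P * P) := by
      field_simp
    have h3 : (1 : ℝ) / (8 * P * P) ≤ 1 / 8 := by
      apply div_le_div_of_nonneg_left (by norm_num) (by norm_num)
      linarith [hP1, mul_le_mul_of_nonneg_left hP1 hP0.le,
        mul_le_mul_of_nonneg_left hP1 (le_trans zero_le_one hP1)]
    rw [h2] at h1
    linarith
  -- bound on ‖v‖
  have hvbd : ‖v‖ ≤ Θ * C_ω * (A + B) := by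
    have h1 : ‖v‖ ≤ |θ₁| * ‖N₁‖ + |θ₂| * ‖N₂‖ := by
      rw [hv]
      calc ‖θ₁ • N₁ - θ₂ • N₂‖ ≤ ‖θ₁ • N₁‖ + ‖θ₂ • N₂‖ := norm_sub_le _ _
        _ = |θ₁| * ‖N₁‖ + |θ₂| * ‖N₂‖ := by rw [norm_smul, norm_smul, Real.norm_eq_abs,
            Real.norm_eq_abs]
    have hA' : A ^ (2 - M_ω) * (C_ω * A ^ (M_ω - 1)) = C_ω * A := by
      rw [mul_comm C_ω, ← mul_assoc, ← Real.rpow_add hA0,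
        show (2 - M_ω) + (M_ω - 1) = 1 by ring, Real.rpow_one, mul_comm]
    have hB' : B ^ (2 - M_ω) * (C_ω * B ^ (M_ω - 1)) = C_ω * B := by
      rw [mul_comm C_ω, ← mul_assoc, ← Real.rpow_add hB0,
        show (2 - M_ω) + (M_ω - 1) = 1 by ring, Real.rpow_one, mul_comm]
    have h2 : |θ₁| * ‖N₁‖ ≤ Θ * (C_ω * A) := by
      calc |θ₁| * ‖N₁‖ ≤ (Θ * A ^ (2 - M_ω)) * (C_ω * A ^ (M_ω - 1)) := by
            apply mul_le_mul hθ₁.le hN1bd (norm_nonneg _)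
            positivity
        _ = Θ * (C_ω * A) := by rw [mul_assoc, hA']
    have h3 : |θ₂| * ‖N₂‖ ≤ Θ * (C_ω * B) := by
      calc |θ₂| * ‖N₂‖ ≤ (Θ * B ^ (2 - M_ω)) * (C_ω * B ^ (M_ω - 1)) := by
            apply mul_le_mul hθ₂.le hN2bd (norm_nonneg _)
            positivity
        _ = Θ * (C_ω * B) := by rw [mul_assoc, hB']
    calc ‖v‖ ≤ |θ₁| * ‖N₁‖ + |θ₂| * ‖N₂‖ := h1
      _ ≤ Θ * (C_ω * A) + Θ * (C_ω * B) := add_le_add h2 h3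
      _ = Θ * C_ω * (A + B) := by ring
  -- comparability of A and B
  have hABv : |A - B| ≤ ‖v‖ := by
    calc |A - B| = |max ‖x₁‖ 1 - max ‖x₂‖ 1| := by rw [max_comm ‖x₁‖ 1, max_comm ‖x₂‖ 1]
      _ ≤ |‖x₁‖ - ‖x₂‖| := abs_max_sub_max_le_abs _ _ _
      _ ≤ ‖x₁ - x₂‖ := abs_norm_sub_norm_le _ _
      _ = ‖v‖ := by rw [hvdef, norm_sub_rev]
  have hvAB : ‖v‖ ≤ (A + B) / 8 := by
    calc ‖v‖ ≤ Θ * C_ω * (A + B) := hvbd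
      _ ≤ (1 / 8) * (A + B) := by
          apply mul_le_mul_of_nonneg_right hΘC (by positivity)
      _ = (A + B) / 8 := by ring
  have hBA2 : B ≤ 2 * A := by
    have := abs_le.mp hABv
    linarith [hvAB]
  have hAB2 : A ≤ 2 * B := by
    have := abs_le.mp hABv
    linarith [hvAB]
  have hvA : ‖v‖ ≤ A / 2 := by
    calc ‖v‖ ≤ (A + B) / 8 := hvAB
      _ ≤ (A + 2 * A) / 8 := by linarith
      _ ≤ A / 2 := by linarith
  -- the ball
  set s : Set (EuclideanSpace ℝ (Fin d)) := Metric.closedBall x₁ ‖v‖ with hsdef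
  have hx₁s : x₁ ∈ s := Metric.mem_closedBall_self (norm_nonneg _)
  have hx₂s : x₂ ∈ s := by
    have h : dist x₂ x₁ = ‖v‖ := by rw [dist_eq_norm, hvdef]
    simpa [hsdef, Metric.mem_closedBall] using h.le
  -- second derivative bound on the ball
  set K : ℝ := C_ω * P * A ^ (M_ω - 2) with hKdef
  have hK0 : 0 ≤ K := by positivity
  have hball : ∀ z ∈ s, ‖iteratedFDeriv ℝ 2 ω z‖ ≤ K := by
    intro z hz
    have hzx : ‖x₁ - z‖ ≤ ‖v‖ := by
      rw [hsdef, Metric.mem_closedBall, dist_eq_norm] at hz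
      rw [norm_sub_rev]; exact hz
    have hzdiff : |A - max 1 ‖z‖| ≤ ‖v‖ := by
      calc |A - max 1 ‖z‖| = |max ‖x₁‖ 1 - max ‖z‖ 1| := by
            rw [max_comm ‖x₁‖ 1, max_comm ‖z‖ 1]
        _ ≤ |‖x₁‖ - ‖z‖| := abs_max_sub_max_le_abs _ _ _
        _ ≤ ‖x₁ - z‖ := abs_norm_sub_norm_le _ _
        _ ≤ ‖v‖ := hzx
    have hz1 : (1 : ℝ) ≤ max 1 ‖z‖ := le_max_left _ _
    have h1 := abs_le.mp hzdiff
    have hle1 : A ≤ 2 * max 1 ‖z‖ := by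
      have : A ≤ max 1 ‖z‖ + ‖v‖ := by linarith [h1.2]
      linarith [hvA, hz1]
    have hle2 : max 1 ‖z‖ ≤ 2 * A := by
      have : max 1 ‖z‖ ≤ A + ‖v‖ := by linarith [h1.1]
      linarith [hvA]
    have hr : (max 1 ‖z‖) ^ (M_ω - 2) ≤ P * A ^ (M_ω - 2) :=
      aux_rpow A (max 1 ‖z‖) (M_ω - 2) hA1 hz1 hle1 hle2
    have h := hωbd 2 (by norm_num) z
    push_cast at h
    calc ‖iteratedFDeriv ℝ 2 ω z‖ ≤ C_ω * (max 1 ‖z‖) ^ (M_ω - 2) := h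
      _ ≤ C_ω * (P * A ^ (M_ω - 2)) := by
          apply mul_le_mul_of_nonneg_left hr hCω.le
      _ = K := by rw [hKdef]; ring
  -- differentiability facts
  have hωdiff : Differentiable ℝ ω := hω.differentiable (by norm_num)
  have hω' : ContDiff ℝ 3 (fderiv ℝ ω) := hω.fderiv_right (by norm_num)
  have hω'diff : Differentiable ℝ (fderiv ℝ ω) := hω'.differentiable (by norm_num)
  have hconv : Convex ℝ s := convex_closedBall _ _
  -- Lipschitz bound for fderiv ω on s
  have hLip : ∀ y ∈ s, ∀ y' ∈ s, ‖fderiv ℝ ω y - fderiv ℝ ω y'‖ ≤ K * ‖y - y'‖ := by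
    intro y hy y' hy'
    refine hconv.norm_image_sub_le_of_norm_fderiv_le (fun z _ => hω'diff z)
      (fun z hz => ?_) hy' hy
    calc ‖fderiv ℝ (fderiv ℝ ω) z‖ ≤ ‖iteratedFDeriv ℝ 1 (fderiv ℝ ω) z‖ :=
          aux_norm_fderiv_le _ _
      _ = ‖iteratedFDeriv ℝ 2 ω z‖ := norm_iteratedFDeriv_fderiv
      _ ≤ K := hball z hz
  have hdist : ∀ y ∈ s, ∀ y' ∈ s, ‖y - y'‖ ≤ 2 * ‖v‖ := by
    intro y hy y' hy'
    rw [hsdef, Metric.mem_closedBall, dist_eq_norm] at hy hy'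
    calc ‖y - y'‖ = ‖(y - x₁) - (y' - x₁)‖ := by abel_nf
      _ ≤ ‖y - x₁‖ + ‖y' - x₁‖ := norm_sub_le _ _
      _ ≤ 2 * ‖v‖ := by linarith
  -- Taylor bound at a base point c ∈ s
  have hTaylor : ∀ c ∈ s, ω c = 0 → ‖fderiv ℝ ω c v‖ ≤ 2 * K * ‖v‖ * ‖v‖ := by
    intro c hc hωc
    set g : EuclideanSpace ℝ (Fin d) → ℝ := fun y => ω y - fderiv ℝ ω c y with hgdef
    have hgdiff : ∀ z, DifferentiableAt ℝ g z := fun z =>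
      ((hωdiff z).sub ((fderiv ℝ ω c).differentiableAt))
    have hgderiv : ∀ z : EuclideanSpace ℝ (Fin d), fderiv ℝ g z = fderiv ℝ ω z - fderiv ℝ ω c := by
      intro z
      rw [hgdef]
      rw [fderiv_fun_sub (hωdiff z) ((fderiv ℝ ω c).differentiableAt)]
      rw [(fderiv ℝ ω c).fderiv]
    have hgbound : ∀ z ∈ s, ‖fderiv ℝ g z‖ ≤ K * (2 * ‖v‖) := by
      intro z hz
      rw [hgderiv z]
      calc ‖fderiv ℝ ω z - fderiv ℝ ω c‖ ≤ K * ‖z - c‖ := hLip z hz c hc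
        _ ≤ K * (2 * ‖v‖) := by
            apply mul_le_mul_of_nonneg_left (hdist z hz c hc) hK0
    have hMVT := hconv.norm_image_sub_le_of_norm_fderiv_le
      (fun z _ => hgdiff z) hgbound hx₁s hx₂s
    have hgval : g x₂ - g x₁ = -(fderiv ℝ ω c v) := by
      rw [hgdef]
      simp only [hω1, hω2, hvdef, map_sub]
      ring
    calc ‖fderiv ℝ ω c v‖ = ‖g x₂ - g x₁‖ := by rw [hgval, norm_neg]
      _ ≤ K * (2 * ‖v‖) * ‖x₂ - x₁‖ := hMVT
      _ = 2 * K * ‖v‖ * ‖v‖ := by rw [← hvdef]; ring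
  have hT1 : ‖fderiv ℝ ω x₁ v‖ ≤ 2 * K * ‖v‖ * ‖v‖ := hTaylor x₁ hx₁s hω1
  have hT2 : ‖fderiv ℝ ω x₂ v‖ ≤ 2 * K * ‖v‖ * ‖v‖ := hTaylor x₂ hx₂s hω2
  -- the key inner product identity
  have hinner : ‖v‖ ^ 2 = θ₁ * (fderiv ℝ ω x₁ v) - θ₂ * (fderiv ℝ ω x₂ v) := by
    rw [← real_inner_self_eq_norm_sq]
    nth_rewrite 1 [hv]
    rw [inner_sub_left, real_inner_smul_left, real_inner_smul_left,
      hN₁def, hN₂def, hgradinner, hgradinner]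
  -- θ bounds, with B^(2-M) ≤ P * A^(2-M)
  have hPB : B ^ (2 - M_ω) ≤ P * A ^ (2 - M_ω) := by
    have : |2 - M_ω| = |M_ω - 2| := abs_sub_comm _ _
    have h := aux_rpow A B (2 - M_ω) hA1 hB1 hAB2 hBA2
    rwa [this] at h
  have hθ₂' : |θ₂| ≤ Θ * (P * A ^ (2 - M_ω)) := by
    calc |θ₂| ≤ Θ * B ^ (2 - M_ω) := hθ₂.le
      _ ≤ Θ * (P * A ^ (2 - M_ω)) := by
          apply mul_le_mul_of_nonneg_left hPB hΘ0.le
  have hθ₁' : |θ₁| ≤ Θ * A ^ (2 - M_ω) := hθ₁.le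
  -- combine
  have hKA : K * A ^ (2 - M_ω) = C_ω * P := by
    rw [hKdef, mul_assoc, ← Real.rpow_add hA0]
    norm_num
  have hfinal : ‖v‖ ^ 2 ≤ Θ * (C_ω * P * (2 + 2 * P)) * ‖v‖ ^ 2 := by
    have habs : ‖v‖ ^ 2 ≤ |θ₁| * ‖fderiv ℝ ω x₁ v‖ + |θ₂| * ‖fderiv ℝ ω x₂ v‖ := by
      rw [hinner]
      calc θ₁ * (fderiv ℝ ω x₁ v) - θ₂ * (fderiv ℝ ω x₂ v)
          ≤ |θ₁ * (fderiv ℝ ω x₁ v) - θ₂ * (fderiv ℝ ω x₂ v)| := le_abs_self _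
        _ ≤ |θ₁ * (fderiv ℝ ω x₁ v)| + |θ₂ * (fderiv ℝ ω x₂ v)| := abs_sub _ _
        _ = |θ₁| * ‖fderiv ℝ ω x₁ v‖ + |θ₂| * ‖fderiv ℝ ω x₂ v‖ := by
            rw [abs_mul, abs_mul, Real.norm_eq_abs, Real.norm_eq_abs]
    have h1 : |θ₁| * ‖fderiv ℝ ω x₁ v‖ ≤ (Θ * A ^ (2 - M_ω)) * (2 * K * ‖v‖ * ‖v‖) := by
      apply mul_le_mul hθ₁' hT1 (norm_nonneg _) (by positivity)
    have h2 : |θ₂| * ‖fderiv ℝ ω x₂ v‖ ≤ (Θ * (P * A ^ (2 - M_ω))) * (2 * K * ‖v‖ * ‖v‖) := by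
      apply mul_le_mul hθ₂' hT2 (norm_nonneg _) (by positivity)
    have hrw1 : (Θ * A ^ (2 - M_ω)) * (2 * K * ‖v‖ * ‖v‖)
        = Θ * (2 * (C_ω * P)) * ‖v‖ ^ 2 := by
      have h : A ^ (2 - M_ω) * K = C_ω * P := by rw [mul_comm]; exact hKA
      linear_combination (2 * Θ * ‖v‖ * ‖v‖) * h
    have hrw2 : (Θ * (P * A ^ (2 - M_ω))) * (2 * K * ‖v‖ * ‖v‖)
        = Θ * (2 * P * (C_ω * P)) * ‖v‖ ^ 2 := by
      have h : A ^ (2 - M_ω) * K = C_ω * P := by rw [mul_comm]; exact hKA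
      linear_combination (2 * Θ * P * ‖v‖ * ‖v‖) * h
    calc ‖v‖ ^ 2 ≤ |θ₁| * ‖fderiv ℝ ω x₁ v‖ + |θ₂| * ‖fderiv ℝ ω x₂ v‖ := habs
      _ ≤ Θ * (2 * (C_ω * P)) * ‖v‖ ^ 2 + Θ * (2 * P * (C_ω * P)) * ‖v‖ ^ 2 := by
          rw [← hrw1, ← hrw2]; exact add_le_add h1 h2
      _ = Θ * (C_ω * P * (2 + 2 * P)) * ‖v‖ ^ 2 := by ring
  have hcoef : Θ * (C_ω * P * (2 + 2 * P)) ≤ 1 / 2 := by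
    have h1 : Θ * (C_ω * P * (2 + 2 * P)) ≤ (1 / (8 * C_ω * P * P)) * (C_ω * P * (2 + 2 * P)) := by
      apply mul_le_mul_of_nonneg_right hΘle (by positivity)
    have h2 : (1 / (8 * C_ω * P * P)) * (C_ω * P * (2 + 2 * P)) = (2 + 2 * P) / (8 * P) := by
      field_simp
    have h3 : (2 + 2 * P) / (8 * P) ≤ 1 / 2 := by
      rw [div_le_div_iff₀ (by positivity) (by norm_num)]
      linarith [hP1]
    rw [h2] at h1
    linarith
  have hv0 : v = 0 := by
    have h : ‖v‖ ^ 2 ≤ (1 / 2) * ‖v‖ ^ 2 := by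
      calc ‖v‖ ^ 2 ≤ Θ * (C_ω * P * (2 + 2 * P)) * ‖v‖ ^ 2 := hfinal
        _ ≤ (1 / 2) * ‖v‖ ^ 2 := by
            apply mul_le_mul_of_nonneg_right hcoef (by positivity)
    have h0 : ‖v‖ ^ 2 ≤ 0 := by linarith
    have h1 : ‖v‖ ^ 2 = 0 := le_antisymm h0 (sq_nonneg _)
    exact norm_eq_zero.mp (sq_eq_zero_iff.mp h1)
  have hx12 : x₁ = x₂ := (sub_eq_zero.mp hv0).symm
  refine ⟨hx12, ?_⟩
  have hN : N₂ = N₁ := by rw [hN₂def, hN₁def, hx12]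
  have hcanc : θ₁ • N₁ = θ₂ • N₁ := by
    have h := heq
    rw [← hx12, hN] at h
    exact add_left_cancel h
  have hNne : N₁ ≠ 0 := hnocrit x₁ hω1 hx1
  have hzero : (θ₁ - θ₂) • N₁ = 0 := by rw [sub_smul, hcanc, sub_self]
  rcases smul_eq_zero.mp hzero with h | h
  · exact sub_eq_zero.mp h
  · exact absurd h hNne
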